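/- Let a ∈ ℝ and b ∈ (0, 1/(2π)) with ρ(S_{a,b}) irrational, and let g : ℝ → ℝ be a real-analytic, strictly increasing map with g(x+1) = g(x) + 1 for all x, such that g(S_{a,b}(x)) − S_{a,b}(g(x)) ∈ ℤ for all x ∈ ℝ, and whose rotation number satisfies ρ(g) − k·ρ(S_{a,b}) ∈ ℤ for some k ∈ ℤ. Then the circle map induced by g equals the k-th iterate of the circle map induced by S_{a,b}: there exist m, n ∈ ℕ with (n : ℤ) − (m : ℤ) = k and j ∈ ℤ such that S_{a,b}^∘m(g(x)) = S_{a,b}^∘n(x) + j for all x ∈ ℝ. -/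

import Mathlib

open Filter Topology

/-- The Arnold family `S_{a,b}(x) = x + a + b sin(2πx)`. -/
noncomputable def S (a b : ℝ) : ℝ → ℝ :=
  fun x => x + a + b * Real.sin (2 * Real.pi * x)

lemma analyticAt_csin (z : ℂ) : AnalyticAt ℂ Complex.sin z := by
  have : AnalyticAt ℂ (fun z : ℂ => (Complex.exp (-z * Complex.I) -
      Complex.exp (z * Complex.I)) * Complex.I / 2) z := by
    apply AnalyticAt.div _ analyticAt_const (by norm_num)
    exact (((analyticAt_id.neg.mul analyticAt_const).cexp).sub
      ((analyticAt_id.mul analyticAt_const).cexp)).mul analyticAt_const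
  exact this.congr (by filter_upwards with w using rfl)

lemma analyticAt_rsin (x : ℝ) : AnalyticAt ℝ Real.sin x := by
  have h1 : AnalyticAt ℝ (fun t : ℝ => Complex.sin (t : ℂ)) x :=
    (analyticAt_csin _).restrictScalars.comp (Complex.ofRealCLM.analyticAt x)
  have h2 : AnalyticAt ℝ (fun t : ℝ => (Complex.sin (t : ℂ)).re) x :=
    (Complex.reCLM.analyticAt _).comp h1
  exact h2

lemma analyticAt_S (a b : ℝ) (x : ℝ) : AnalyticAt ℝ (S a b) x := by
  unfold S
  exact (analyticAt_id.add analyticAt_const).add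
    (analyticAt_const.mul ((analyticAt_rsin _).comp (analyticAt_const.mul analyticAt_id)))

lemma abs_sin_sub_sin_le (x y : ℝ) : |Real.sin x - Real.sin y| ≤ |x - y| := by
  rw [Real.sin_sub_sin]
  have h1 : |Real.sin ((x - y) / 2)| ≤ |(x - y) / 2| := Real.abs_sin_le_abs
  have h2 : |Real.cos ((x + y) / 2)| ≤ 1 := Real.abs_cos_le_one _
  have h3 : |(x - y) / 2| = |x - y| / 2 := by rw [abs_div]; norm_num
  rw [abs_mul, abs_mul, abs_two]
  nlinarith [abs_nonneg (Real.sin ((x - y) / 2)), abs_nonneg (x - y)]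

lemma S_strictMono (a b : ℝ) (hb : b ∈ Set.Ioo (0 : ℝ) (1 / (2 * Real.pi))) :
    StrictMono (S a b) := by
  obtain ⟨hb0, hb1⟩ := hb
  have hπ : (0 : ℝ) < Real.pi := Real.pi_pos
  have h2πb : 2 * Real.pi * b < 1 := by
    rw [lt_div_iff₀ (by positivity)] at hb1
    linarith
  intro x y hxy
  have hs : |Real.sin (2 * Real.pi * y) - Real.sin (2 * Real.pi * x)| ≤
      2 * Real.pi * (y - x) := by
    have := abs_sin_sub_sin_le (2 * Real.pi * y) (2 * Real.pi * x)
    have h : |2 * Real.pi * y - 2 * Real.pi * x| = 2 * Real.pi * (y - x) := by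
      rw [abs_of_nonneg (by nlinarith)]; ring
    linarith [this, le_of_eq h]
  have habs := abs_le.1 hs
  simp only [S]
  nlinarith [habs.1]

lemma S_map_add_one (a b : ℝ) (x : ℝ) : S a b (x + 1) = S a b x + 1 := by
  simp only [S]
  have : 2 * Real.pi * (x + 1) = 2 * Real.pi * x + 2 * Real.pi := by ring
  rw [this, Real.sin_add_two_pi]
  ring

lemma S_continuous (a b : ℝ) : Continuous (S a b) := by
  unfold S; fun_prop
/-- Suppose `ρ(S_{a,b})` is irrational and `g : ℝ → ℝ` is a real-analytic, strictly
increasing lift of a circle map commuting with `S_{a,b}` modulo `ℤ`, whose rotation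
number satisfies `ρ(g) − k·ρ(S_{a,b}) ∈ ℤ` for some `k ∈ ℤ`. Then the circle map
induced by `g` equals the `k`-th iterate of the circle map induced by `S_{a,b}`. -/
theorem circle_germ_with_rotation_is_iterate (a b : ℝ)
    (hb : b ∈ Set.Ioo (0 : ℝ) (1 / (2 * Real.pi)))
    (ρS : ℝ) (hρS : Tendsto (fun n : ℕ => (S a b)^[n] 0 / (n : ℝ)) atTop (𝓝 ρS))
    (hirr : Irrational ρS)
    (g : ℝ → ℝ) (hg : ∀ x : ℝ, AnalyticAt ℝ g x) (hmono : StrictMono g)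
    (hper : ∀ x : ℝ, g (x + 1) = g x + 1)
    (hcomm : ∀ x : ℝ, ∃ j : ℤ, g (S a b x) - S a b (g x) = (j : ℝ))
    (ρg : ℝ) (hρg : Tendsto (fun n : ℕ => g^[n] 0 / (n : ℝ)) atTop (𝓝 ρg))
    (k : ℤ) (hk : ∃ j₀ : ℤ, ρg - (k : ℝ) * ρS = (j₀ : ℝ)) :
    ∃ m n : ℕ, (n : ℤ) - (m : ℤ) = k ∧
      ∃ j : ℤ, ∀ x : ℝ, (S a b)^[m] (g x) = (S a b)^[n] x + (j : ℝ) := by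
  classical
  set F : CircleDeg1Lift := ⟨⟨S a b, (S_strictMono a b hb).monotone⟩, S_map_add_one a b⟩
    with hFdef
  have hFcoe : ⇑F = S a b := rfl
  set Gm : CircleDeg1Lift := ⟨⟨g, hmono.monotone⟩, hper⟩ with hGdef
  have hGcoe : ⇑Gm = g := rfl
  have gcont : Continuous g := continuous_iff_continuousAt.2 fun x => (hg x).continuousAt
  have Fcont : Continuous (F : ℝ → ℝ) := S_continuous a b
  have Gcont : Continuous (Gm : ℝ → ℝ) := gcont
  have hFunit : IsUnit F := CircleDeg1Lift.isUnit_iff_bijective.2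
    ⟨(S_strictMono a b hb).injective, F.continuous_iff_surjective.1 Fcont⟩
  have hGunit : IsUnit Gm := CircleDeg1Lift.isUnit_iff_bijective.2
    ⟨hmono.injective, Gm.continuous_iff_surjective.1 Gcont⟩
  set uF : CircleDeg1Liftˣ := hFunit.unit with huFdef
  set uG : CircleDeg1Liftˣ := hGunit.unit with huGdef
  have huFcoe : (↑uF : CircleDeg1Lift) = F := hFunit.unit_spec
  have huGcoe : (↑uG : CircleDeg1Lift) = Gm := hGunit.unit_spec
  have hτF : CircleDeg1Lift.translationNumber F = ρS :=
    F.translationNumber_eq_of_tendsto₀ hρS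
  have hτG : CircleDeg1Lift.translationNumber Gm = ρg :=
    Gm.translationNumber_eq_of_tendsto₀ hρg
  -- Step 1: the commutation defect is a constant integer `j₁`.
  obtain ⟨j₁, hj₁⟩ := hcomm 0
  set c : ℝ → ℝ := fun t => g (S a b t) - S a b (g t) with hcdef
  have ccont : Continuous c :=
    (gcont.comp (S_continuous a b)).sub ((S_continuous a b).comp gcont)
  have hconst : ∀ x : ℝ, c x = (j₁ : ℝ) := by
    intro x
    by_contra hx
    obtain ⟨jx, hjx⟩ := hcomm x
    have hcx : c x = (jx : ℝ) := hjx
    have hc0 : c 0 = (j₁ : ℝ) := hj₁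
    have hne : jx ≠ j₁ := by
      rintro rfl
      exact hx (by rw [hcx])
    set v : ℝ := ((min j₁ jx : ℤ) : ℝ) + 1/2 with hvdef
    have hvmem : v ∈ Set.uIcc (c 0) (c x) := by
      rw [Set.mem_uIcc]
      have hminmax : (min j₁ jx : ℤ) + 1 ≤ max j₁ jx := by
        rcases lt_or_gt_of_ne hne with h | h
        · simp [min_eq_left h.le, max_eq_right h.le]; omega
        · simp [min_eq_right h.le, max_eq_left h.le]; omega
      rcases le_total j₁ jx with h | h
      · left
        rw [hc0, hcx]
        constructor
        · rw [hvdef]; push_cast [min_eq_left h]; linarith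
        · rw [hvdef]
          have : ((min j₁ jx : ℤ) : ℝ) + 1 ≤ ((max j₁ jx : ℤ) : ℝ) := by exact_mod_cast hminmax
          have hmx : ((max j₁ jx : ℤ) : ℝ) = (jx : ℝ) := by rw [max_eq_right h]
          linarith
      · right
        rw [hc0, hcx]
        constructor
        · rw [hvdef]; push_cast [min_eq_right h]; linarith
        · rw [hvdef]
          have : ((min j₁ jx : ℤ) : ℝ) + 1 ≤ ((max j₁ jx : ℤ) : ℝ) := by exact_mod_cast hminmax
          have hmx : ((max j₁ jx : ℤ) : ℝ) = (j₁ : ℝ) := by rw [max_eq_left h]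
          linarith
    obtain ⟨y, -, hy⟩ := intermediate_value_uIcc (ccont.continuousOn (s := Set.uIcc 0 x)) hvmem
    obtain ⟨jy, hjy⟩ := hcomm y
    have : (jy : ℝ) = ((min j₁ jx : ℤ) : ℝ) + 1/2 := by
      rw [← hvdef, ← hy]; exact hjy.symm
    have h3 : (2 * jy : ℤ) = 2 * min j₁ jx + 1 := by
      have h2 : ((2 * jy : ℤ) : ℝ) = ((2 * min j₁ jx + 1 : ℤ) : ℝ) := by
        push_cast at this ⊢; linarith
      exact_mod_cast h2
    omega
  have hSemi : ∀ x : ℝ, g (S a b x) = S a b (g x) + (j₁ : ℝ) := fun x => by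
    have := hconst x; simp only [hcdef] at this; linarith
  -- Step 2: `j₁ = 0`, hence `g` commutes with `S a b`.
  set Tj : CircleDeg1Lift := ↑(CircleDeg1Lift.translate (Multiplicative.ofAdd (j₁ : ℝ))) with hTjdef
  have hA : (↑uG * F * ↑uG⁻¹ : CircleDeg1Lift) = Tj * F := by
    apply CircleDeg1Lift.ext
    intro x
    have h1 : (↑uG * F * ↑uG⁻¹ : CircleDeg1Lift) x
        = g (S a b ((↑uG⁻¹ : CircleDeg1Lift) x)) := by
      simp only [CircleDeg1Lift.mul_apply, huGcoe, hGcoe, hFcoe]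
    have h2 : g ((↑uG⁻¹ : CircleDeg1Lift) x) = x := by
      have h := CircleDeg1Lift.units_apply_inv_apply uG x
      rw [huGcoe] at h
      exact h
    rw [h1, hSemi, h2]
    rw [hTjdef, CircleDeg1Lift.mul_apply, CircleDeg1Lift.translate_apply, hFcoe]
    ring
  have hct : Commute Tj F := by
    rw [CircleDeg1Lift.commute_iff_commute]
    intro x
    show Tj (F x) = F (Tj x)
    rw [hTjdef, CircleDeg1Lift.translate_apply, CircleDeg1Lift.translate_apply, F.map_int_add]
  have hj0 : j₁ = 0 := by
    have e1 := CircleDeg1Lift.translationNumber_conj_eq uG F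
    rw [hA, CircleDeg1Lift.translationNumber_mul_of_commute hct, hTjdef,
      CircleDeg1Lift.translationNumber_translate] at e1
    have : (j₁ : ℝ) = 0 := by linarith
    exact_mod_cast this
  have hcommFG : Commute Gm F := by
    rw [CircleDeg1Lift.commute_iff_commute]
    intro x
    show g (S a b x) = S a b (g x)
    have := hSemi x
    rw [hj0] at this
    simpa using this
  -- Step 3: set up `m`, `n`, `j₀`.
  obtain ⟨j₀, hj₀⟩ := hk
  refine ⟨(-k).toNat, k.toNat, by omega, j₀, ?_⟩
  set m : ℕ := (-k).toNat with hmdef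
  set n : ℕ := k.toNat with hndef
  have hmnZ : (n : ℤ) - (m : ℤ) = k := by omega
  have hmn : (n : ℝ) - (m : ℝ) = (k : ℝ) := by exact_mod_cast hmnZ
  set u : CircleDeg1Lift := F ^ m * Gm with hudef
  have cFu : Commute F u := ((Commute.refl F).pow_right m).mul_right hcommFG.symm
  have hτu : CircleDeg1Lift.translationNumber u = m * ρS + ρg := by
    rw [hudef, CircleDeg1Lift.translationNumber_mul_of_commute (hcommFG.symm.pow_left m),
      CircleDeg1Lift.translationNumber_pow, hτF, hτG]
  have hτFn : CircleDeg1Lift.translationNumber ((F : CircleDeg1Lift) ^ n) = n * ρS := by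
    rw [CircleDeg1Lift.translationNumber_pow, hτF]
  set vU : CircleDeg1Liftˣ := uF ^ n with hvUdef
  have hvcoe : (↑vU : CircleDeg1Lift) = F ^ n := by
    rw [hvUdef, Units.val_pow_eq_pow_val, huFcoe]
  have cuv : Commute u (↑vU : CircleDeg1Lift) := by
    rw [hvcoe]; exact cFu.symm.pow_right n
  have cuvinv : Commute u (↑vU⁻¹ : CircleDeg1Lift) := cuv.units_inv_right
  set Φ : CircleDeg1Lift := u * ↑vU⁻¹ with hΦdef
  have hτv : CircleDeg1Lift.translationNumber (↑vU : CircleDeg1Lift) = n * ρS := by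
    rw [hvcoe]; exact hτFn
  have hτΦ : CircleDeg1Lift.translationNumber Φ = (j₀ : ℝ) := by
    rw [hΦdef, CircleDeg1Lift.translationNumber_mul_of_commute cuvinv,
      CircleDeg1Lift.translationNumber_units_inv, hτv, hτu]
    have hk' : (k : ℝ) = (n : ℝ) - m := by linarith
    rw [hk'] at hj₀
    linarith
  have hvinvcont : Continuous (↑vU⁻¹ : CircleDeg1Lift) :=
    (↑vU⁻¹ : CircleDeg1Lift).continuous_iff_surjective.2
      (CircleDeg1Lift.isUnit_iff_bijective.1 (vU⁻¹).isUnit).2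
  have hFm_cont : ∀ p : ℕ, Continuous ⇑((F : CircleDeg1Lift) ^ p) := by
    intro p
    rw [CircleDeg1Lift.coe_pow]
    exact Fcont.iterate p
  have hucont : Continuous ⇑u := by
    rw [hudef, CircleDeg1Lift.coe_mul]
    exact (hFm_cont m).comp gcont
  have hΦcont : Continuous ⇑Φ := by
    rw [hΦdef, CircleDeg1Lift.coe_mul]
    exact hucont.comp hvinvcont
  obtain ⟨y, hy⟩ := Φ.exists_eq_add_translationNumber hΦcont
  set x₀ : ℝ := (↑vU⁻¹ : CircleDeg1Lift) y with hx₀def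
  have hx₀ : u x₀ = ((F : CircleDeg1Lift) ^ n) x₀ + (j₀ : ℝ) := by
    have h1 : Φ y = u x₀ := by rw [hΦdef, CircleDeg1Lift.mul_apply]
    have h2 : ((F : CircleDeg1Lift) ^ n) x₀ = y := by
      rw [← hvcoe, hx₀def]
      exact CircleDeg1Lift.units_apply_inv_apply vU y
    rw [h2, ← h1, hy, hτΦ]
  -- Step 4: propagate the coincidence along the `S`-orbit of `x₀`.
  have hstep : ∀ x : ℝ, u x = ((F : CircleDeg1Lift) ^ n) x + (j₀ : ℝ) →
      u (F x) = ((F : CircleDeg1Lift) ^ n) (F x) + (j₀ : ℝ) := by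
    intro x hx
    have h1 : u (F x) = F (u x) := ((CircleDeg1Lift.commute_iff_commute.1 cFu) x).symm
    have h2 : F (((F : CircleDeg1Lift) ^ n) x + (j₀ : ℝ))
        = F (((F : CircleDeg1Lift) ^ n) x) + (j₀ : ℝ) := F.map_add_int _ j₀
    have h3 : F (((F : CircleDeg1Lift) ^ n) x) = ((F : CircleDeg1Lift) ^ n) (F x) :=
      (CircleDeg1Lift.commute_iff_commute.1 ((Commute.refl F).pow_right n)) x
    rw [h1, hx, h2, h3]
  have hzero : ∀ p : ℕ, u (((F : CircleDeg1Lift) ^ p) x₀)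
      = ((F : CircleDeg1Lift) ^ n) (((F : CircleDeg1Lift) ^ p) x₀) + (j₀ : ℝ) := by
    intro p
    induction p with
    | zero => simpa using hx₀
    | succ p ih =>
      have hps : ((F : CircleDeg1Lift) ^ (p + 1)) x₀ = F (((F : CircleDeg1Lift) ^ p) x₀) := by
        rw [pow_succ']; rfl
      rw [hps]
      exact hstep _ ih
  -- Step 5: the analytic function `φ` has infinitely many zeros in `[0,1]`.
  set φ : ℝ → ℝ := fun x => u x - ((F : CircleDeg1Lift) ^ n) x - (j₀ : ℝ) with hφdef
  have hφint : ∀ (x : ℝ) (d : ℤ), φ (x + (d : ℝ)) = φ x := by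
    intro x d
    simp only [hφdef]
    rw [u.map_add_int, ((F : CircleDeg1Lift) ^ n).map_add_int]
    ring
  set w : ℕ → ℝ := fun p => Int.fract (((F : CircleDeg1Lift) ^ p) x₀) with hwdef
  have hwzero : ∀ p, φ (w p) = 0 := by
    intro p
    have h1 : w p = ((F : CircleDeg1Lift) ^ p) x₀
        + ((-⌊((F : CircleDeg1Lift) ^ p) x₀⌋ : ℤ) : ℝ) := by
      show Int.fract _ = _
      rw [Int.fract]
      push_cast
      ring
    rw [h1, hφint]
    simp only [hφdef]
    rw [hzero p]
    ring
  have hwmem : ∀ p, w p ∈ Set.Icc (0 : ℝ) 1 :=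
    fun p => ⟨Int.fract_nonneg _, (Int.fract_lt_one _).le⟩
  have hwinj : Function.Injective w := by
    intro p q hpq
    by_contra hne
    wlog hlt : p < q generalizing p q
    · exact this hpq.symm (Ne.symm hne) (by omega)
    set d : ℤ := ⌊((F : CircleDeg1Lift) ^ q) x₀⌋ - ⌊((F : CircleDeg1Lift) ^ p) x₀⌋ with hddef
    have hd : ((F : CircleDeg1Lift) ^ q) x₀ = ((F : CircleDeg1Lift) ^ p) x₀ + (d : ℝ) := by
      have h1 : Int.fract (((F : CircleDeg1Lift) ^ p) x₀)
          = Int.fract (((F : CircleDeg1Lift) ^ q) x₀) := hpq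
      rw [Int.fract, Int.fract] at h1
      rw [hddef]
      push_cast
      linarith
    have h2 : ((F : CircleDeg1Lift) ^ (q - p)) (((F : CircleDeg1Lift) ^ p) x₀)
        = ((F : CircleDeg1Lift) ^ p) x₀ + (d : ℝ) := by
      rw [← CircleDeg1Lift.mul_apply, ← pow_add, Nat.sub_add_cancel hlt.le]
      exact hd
    have h3 := F.translationNumber_of_map_pow_eq_add_int h2
      (by omega : 0 < q - p)
    rw [hτF] at h3
    exact hirr ⟨(d : ℚ) / ((q - p : ℕ) : ℚ), by push_cast; rw [← h3]⟩
  have hTinf : (Set.range w).Infinite := Set.infinite_range_of_injective hwinj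
  obtain ⟨z, -, hz⟩ := hTinf.exists_accPt_of_subset_isCompact isCompact_Icc
    (Set.range_subset_iff.2 hwmem)
  have hfreq : ∃ᶠ t in 𝓝[≠] z, φ t = 0 := by
    have h1 := accPt_iff_frequently.1 hz
    refine frequently_nhdsWithin_iff.2 (h1.mono ?_)
    rintro t ⟨htne, q, rfl⟩
    exact ⟨hwzero q, htne⟩
  -- Step 6: identity theorem.
  have hit : ∀ (p : ℕ) (t : ℝ), AnalyticAt ℝ ((S a b)^[p]) t := by
    intro p
    induction p with
    | zero => intro t; simpa using (analyticAt_id : AnalyticAt ℝ (fun s : ℝ => s) t)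
    | succ p ih =>
      intro t
      rw [Function.iterate_succ']
      exact (analyticAt_S a b _).comp (ih t)
  have hueq : ∀ t : ℝ, u t = (S a b)^[m] (g t) := by
    intro t
    rw [hudef, CircleDeg1Lift.mul_apply]
    congr 1
    rw [CircleDeg1Lift.coe_pow]
    rfl
  have hFneq : ∀ t : ℝ, ((F : CircleDeg1Lift) ^ n) t = (S a b)^[n] t := by
    intro t
    rw [CircleDeg1Lift.coe_pow]
    rfl
  have hφeq : φ = fun t => (S a b)^[m] (g t) - (S a b)^[n] t - (j₀ : ℝ) := by
    funext t
    simp only [hφdef]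
    rw [hueq, hFneq]
  have hφan : AnalyticOnNhd ℝ φ Set.univ := by
    intro x _
    rw [hφeq]
    exact (((hit m _).comp (hg x)).sub (hit n x)).sub analyticAt_const
  have hall := hφan.eqOn_zero_of_preconnected_of_frequently_eq_zero isPreconnected_univ
    (Set.mem_univ z) hfreq
  intro x
  have hx := hall (Set.mem_univ x)
  rw [hφeq] at hx
  simp only [Pi.zero_apply] at hx
  linarith
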